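/- For a direct sum of Lie algebras g ⊕ g', the map D ↦ (D|_g, D|_{g'}) gives an isomorphism AID(g ⊕ g') ≅ AID(g) ⊕ AID(g'). -/
import Mathlib


section ProdLie

variable (K L L' : Type*) [Field K] [LieRing L] [LieAlgebra K L]
  [LieRing L'] [LieAlgebra K L']

/-- The direct sum (product) of two Lie rings, with componentwise bracket. -/
instance prodLieRing : LieRing (L × L') where
  bracket p q := (⁅p.1, q.1⁆, ⁅p.2, q.2⁆)
  add_lie x y z := Prod.ext (add_lie x.1 y.1 z.1) (add_lie x.2 y.2 z.2)
  lie_add x y z := Prod.ext (lie_add x.1 y.1 z.1) (lie_add x.2 y.2 z.2)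
  lie_self x := Prod.ext (lie_self x.1) (lie_self x.2)
  leibniz_lie x y z := Prod.ext (leibniz_lie x.1 y.1 z.1) (leibniz_lie x.2 y.2 z.2)

/-- The direct sum of two Lie algebras. -/
instance prodLieAlgebra : LieAlgebra K (L × L') where
  lie_smul c x y := Prod.ext (lie_smul c x.1 y.1) (lie_smul c x.2 y.2)

/-- The space of almost inner derivations of a Lie algebra, as a submodule of
the module of derivations. -/
def AID : Submodule K (LieDerivation K L L) where
  carrier := {D | ∀ x : L, ∃ y : L, D x = ⁅y, x⁆}
  add_mem' := by
    intro D D' hD hD' x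
    obtain ⟨y, hy⟩ := hD x
    obtain ⟨y', hy'⟩ := hD' x
    exact ⟨y + y', by simp [hy, hy', add_lie]⟩
  zero_mem' := fun x => ⟨0, by simp⟩
  smul_mem' := by
    intro c D hD x
    obtain ⟨y, hy⟩ := hD x
    exact ⟨c • y, by simp [hy, smul_lie]⟩

variable {K L L'}

@[simp] lemma prod_bracket_def (p q : L × L') : ⁅p, q⁆ = (⁅p.1, q.1⁆, ⁅p.2, q.2⁆) := rfl

/-- Restriction of a derivation of `L × L'` to the first factor. -/
def fstDer (D : LieDerivation K (L × L') (L × L')) : LieDerivation K L L where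
  toFun x := (D (x, 0)).1
  map_add' x y := by
    show (D (x + y, 0)).1 = (D (x, 0)).1 + (D (y, 0)).1
    have h : ((x + y, 0) : L × L') = (x, 0) + (y, 0) := by simp
    rw [h, map_add]; rfl
  map_smul' c x := by
    show (D (c • x, 0)).1 = c • (D (x, 0)).1
    have h : ((c • x, 0) : L × L') = c • (x, 0) := by simp
    rw [h, map_smul]; rfl
  leibniz' a b := by
    show (D (⁅a, b⁆, 0)).1 = _
    have h : ((⁅a, b⁆, 0) : L × L') = ⁅((a, 0) : L × L'), ((b, 0) : L × L')⁆ := by simp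
    rw [h, LieDerivation.apply_lie_eq_sub]
    simp

/-- Restriction of a derivation of `L × L'` to the second factor. -/
def sndDer (D : LieDerivation K (L × L') (L × L')) : LieDerivation K L' L' where
  toFun x := (D (0, x)).2
  map_add' x y := by
    show (D (0, x + y)).2 = (D (0, x)).2 + (D (0, y)).2
    have h : ((0, x + y) : L × L') = (0, x) + (0, y) := by simp
    rw [h, map_add]; rfl
  map_smul' c x := by
    show (D (0, c • x)).2 = c • (D (0, x)).2
    have h : ((0, c • x) : L × L') = c • (0, x) := by simp
    rw [h, map_smul]; rfl
  leibniz' a b := by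
    show (D (0, ⁅a, b⁆)).2 = _
    have h : ((0, ⁅a, b⁆) : L × L') = ⁅((0, a) : L × L'), ((0, b) : L × L')⁆ := by simp
    rw [h, LieDerivation.apply_lie_eq_sub]
    simp

/-- The product of two derivations. -/
def pairDer (D : LieDerivation K L L) (D' : LieDerivation K L' L') :
    LieDerivation K (L × L') (L × L') where
  toFun p := (D p.1, D' p.2)
  map_add' p q := by simp
  map_smul' c p := by simp
  leibniz' a b := by
    ext
    · simp [D.apply_lie_eq_sub a.1 b.1]
    · simp [D'.apply_lie_eq_sub a.2 b.2]

@[simp] lemma fstDer_apply (D : LieDerivation K (L × L') (L × L')) (x : L) :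
    fstDer D x = (D (x, 0)).1 := rfl

@[simp] lemma sndDer_apply (D : LieDerivation K (L × L') (L × L')) (x : L') :
    sndDer D x = (D (0, x)).2 := rfl

@[simp] lemma pairDer_apply (D : LieDerivation K L L) (D' : LieDerivation K L' L')
    (p : L × L') : pairDer D D' p = (D p.1, D' p.2) := rfl

variable (K L L')

variable {K L L'}

lemma fstDer_mem (D : LieDerivation K (L × L') (L × L'))
    (hD : D ∈ AID K (L × L')) : fstDer D ∈ AID K L := by
  intro x
  obtain ⟨y, hy⟩ := hD (x, 0)
  exact ⟨y.1, by simp [hy]⟩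

lemma sndDer_mem (D : LieDerivation K (L × L') (L × L'))
    (hD : D ∈ AID K (L × L')) : sndDer D ∈ AID K L' := by
  intro x
  obtain ⟨y, hy⟩ := hD (0, x)
  exact ⟨y.2, by simp [hy]⟩

lemma pairDer_mem (D : LieDerivation K L L) (D' : LieDerivation K L' L')
    (hD : D ∈ AID K L) (hD' : D' ∈ AID K L') : pairDer D D' ∈ AID K (L × L') := by
  intro x
  obtain ⟨y, hy⟩ := hD x.1
  obtain ⟨y', hy'⟩ := hD' x.2
  exact ⟨(y, y'), by simp [hy, hy']⟩

variable (K L L')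

/-- For a direct sum `g ⊕ g'` of Lie algebras, the map `D ↦ (D|_g, D|_{g'})`
gives an isomorphism `AID(g ⊕ g') ≅ AID(g) ⊕ AID(g')`. -/
theorem stmt11 :
    ∃ e : AID K (L × L') ≃ₗ[K] AID K L × AID K L',
      ∀ D : AID K (L × L'),
        (∀ x : L, ((e D).1 : LieDerivation K L L) x = ((D : LieDerivation K (L × L') (L × L')) (x, 0)).1) ∧
        (∀ x' : L', ((e D).2 : LieDerivation K L' L') x' = ((D : LieDerivation K (L × L') (L × L')) (0, x')).2) := by
  refine ⟨{
    toFun := fun D => (⟨fstDer D.1, fstDer_mem D.1 D.2⟩, ⟨sndDer D.1, sndDer_mem D.1 D.2⟩)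
    invFun := fun p => ⟨pairDer p.1.1 p.2.1, pairDer_mem p.1.1 p.2.1 p.1.2 p.2.2⟩
    map_add' := ?_
    map_smul' := ?_
    left_inv := ?_
    right_inv := ?_ }, fun D => ⟨fun x => rfl, fun x' => rfl⟩⟩
  · intro D E
    refine Prod.ext (Subtype.ext (LieDerivation.ext fun x => ?_))
      (Subtype.ext (LieDerivation.ext fun x => ?_)) <;> simp
  · intro c D
    refine Prod.ext (Subtype.ext (LieDerivation.ext fun x => ?_))
      (Subtype.ext (LieDerivation.ext fun x => ?_)) <;> simp
  · intro D
    refine Subtype.ext (LieDerivation.ext fun p => ?_)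
    obtain ⟨y, hy⟩ := D.2 (p.1, 0)
    obtain ⟨y', hy'⟩ := D.2 (0, p.2)
    have hp : p = (p.1, 0) + (0, p.2) := by simp
    have hsplit : (D : LieDerivation K (L × L') (L × L')) p
        = (D : LieDerivation K (L × L') (L × L')) (p.1, 0)
          + (D : LieDerivation K (L × L') (L × L')) (0, p.2) := by
      conv_lhs => rw [hp]
      rw [map_add]
    simp [hsplit, hy, hy', Prod.ext_iff]
  · intro p
    refine Prod.ext (Subtype.ext (LieDerivation.ext fun x => ?_))
      (Subtype.ext (LieDerivation.ext fun x => ?_)) <;> simp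

end ProdLie
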